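/- For every ε ∈ (0,1) there exists a constant C > 0, depending only on ε, such that for all θ ∈ (0,π) and all λ = α + i t ∈ ℂ with 1 − (1−ε)π/θ ≤ α ≤ (1−ε)π/θ − 1 and |t|·θ ≥ 1, one has ( |λ| + |λ|^{−1} ) · ∫₀^θ |sin((λ+1)φ)/(4λ sin((λ+1)θ)) − sin((λ−1)φ)/(4λ sin((λ−1)θ))|² dφ ≤ C / |λ|⁴. -/

import Mathlib

open Real MeasureTheory

namespace GreenAux


lemma trig_identity (l p t : ℂ) :
    Complex.sin ((l+1)*p) * Complex.sin ((l-1)*t)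
      - Complex.sin ((l-1)*p) * Complex.sin ((l+1)*t)
    = Complex.sin (l*(p+t)) * Complex.sin (p-t)
      - Complex.sin (l*(p-t)) * Complex.sin (p+t) := by
  have h : ∀ a b : ℂ, Complex.sin (a + b) = Complex.sin a * Complex.cos b + Complex.cos a * Complex.sin b :=
    Complex.sin_add
  rw [show (l+1)*p = l*p + p by ring, show (l-1)*t = l*t + (-t) by ring,
    show (l-1)*p = l*p + (-p) by ring, show (l+1)*t = l*t + t by ring,
    show l*(p+t) = l*p + l*t by ring, show l*(p-t) = l*p + (-(l*t)) by ring,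
    show p - t = p + (-t) by ring]
  simp only [h, Complex.sin_neg, Complex.cos_neg]
  ring

lemma abs_sin_sq (z : ℂ) :
    (‖Complex.sin z‖)^2
      = (Real.sin z.re * Real.cosh z.im)^2 + (Real.cos z.re * Real.sinh z.im)^2 := by
  rw [Complex.sin_eq]
  have : (Complex.sin z.re * Complex.cosh z.im + Complex.cos z.re * Complex.sinh z.im * Complex.I)
      = ((Real.sin z.re * Real.cosh z.im : ℝ) : ℂ) + ((Real.cos z.re * Real.sinh z.im : ℝ) : ℂ) * Complex.I := by
    push_cast
    ring
  rw [this, Complex.norm_add_mul_I, Real.sq_sqrt (by positivity)]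

lemma abs_sin_le (z : ℂ) : ‖Complex.sin z‖ ≤ Real.exp |z.im| := by
  have h1 : (‖Complex.sin z‖)^2 ≤ (Real.cosh z.im)^2 := by
    rw [abs_sin_sq]
    have hs := Real.sin_sq_add_cos_sq z.re
    nlinarith [Real.sinh_sq z.im, sq_nonneg (Real.sin z.re * Real.sinh z.im), sq_nonneg (Real.sin z.re), sq_nonneg (Real.cos z.re),
      sq_nonneg (Real.sinh z.im), sq_nonneg (Real.cosh z.im)]
  have h2 : ‖Complex.sin z‖ ≤ Real.cosh z.im := by
    nlinarith [norm_nonneg (Complex.sin z), Real.cosh_pos z.im]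
  refine h2.trans ?_
  rw [← Real.cosh_abs]
  rw [Real.cosh_eq]
  have := Real.exp_pos (-|z.im|)
  have h3 : Real.exp (-|z.im|) ≤ Real.exp |z.im| := Real.exp_le_exp.2 (by simp [neg_le_self_iff, abs_nonneg])
  linarith

lemma sinh_le_abs_sin (z : ℂ) : Real.sinh |z.im| ≤ ‖Complex.sin z‖ := by
  have h1 : (Real.sinh z.im)^2 ≤ (‖Complex.sin z‖)^2 := by
    rw [abs_sin_sq]
    have hs := Real.sin_sq_add_cos_sq z.re
    nlinarith [Real.sinh_sq z.im, sq_nonneg (Real.sin z.re), sq_nonneg (Real.cos z.re * Real.sinh z.im), sq_nonneg (Real.sin z.re * Real.sinh z.im)]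
  have h2 : |Real.sinh z.im| ≤ ‖Complex.sin z‖ := by
    have := norm_nonneg (Complex.sin z)
    nlinarith [abs_nonneg (Real.sinh z.im), sq_abs (Real.sinh z.im)]
  rw [← Real.abs_sinh]
  exact h2



lemma self_le_exp_sub_one (x : ℝ) : x ≤ Real.exp (x - 1) := by
  have := Real.add_one_le_exp (x - 1); linarith

lemma mul_exp_neg_le (x : ℝ) : x * Real.exp (-x) ≤ Real.exp (-1) := by
  have h := self_le_exp_sub_one x
  have hp : (0:ℝ) < Real.exp (-x) := Real.exp_pos _
  calc x * Real.exp (-x) ≤ Real.exp (x - 1) * Real.exp (-x) :=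
        mul_le_mul_of_nonneg_right h hp.le
    _ = Real.exp (-1) := by rw [← Real.exp_add]; ring_nf

lemma mul_exp_neg_half_le (x : ℝ) :
    x * Real.exp (-x) ≤ 2 * Real.exp (-1) * Real.exp (-(x/2)) := by
  have h : x * Real.exp (-(x/2)) ≤ 2 * Real.exp (-1) := by
    have := mul_exp_neg_le (x/2)
    nlinarith [Real.exp_pos (-(x/2))]
  have hp : (0:ℝ) < Real.exp (-(x/2)) := Real.exp_pos _
  calc x * Real.exp (-x) = (x * Real.exp (-(x/2))) * Real.exp (-(x/2)) := by
        rw [mul_assoc, ← Real.exp_add]; ring_nf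
    _ ≤ 2 * Real.exp (-1) * Real.exp (-(x/2)) := mul_le_mul_of_nonneg_right h hp.le

lemma sq_mul_exp_le (x : ℝ) (hx : 1 ≤ x) : x^2 * Real.exp (-(2*x)) ≤ Real.exp (-2) := by
  have h := self_le_exp_sub_one x
  have h2 : x^2 ≤ Real.exp (2*x - 2) := by
    have : Real.exp (x-1) * Real.exp (x-1) = Real.exp (2*x-2) := by
      rw [← Real.exp_add]; ring_nf
    nlinarith [Real.exp_pos (x-1)]
  have hp : (0:ℝ) < Real.exp (-(2*x)) := Real.exp_pos _
  calc x^2 * Real.exp (-(2*x)) ≤ Real.exp (2*x-2) * Real.exp (-(2*x)) :=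
        mul_le_mul_of_nonneg_right h2 hp.le
    _ = Real.exp (-2) := by rw [← Real.exp_add]; ring_nf

lemma sinh_lower (y : ℝ) (hy : 1 ≤ y) :
    (1 - Real.exp (-2)) / 2 * Real.exp y ≤ Real.sinh y := by
  rw [Real.sinh_eq]
  have h : Real.exp (-y) ≤ Real.exp (-2) * Real.exp y := by
    rw [← Real.exp_add]
    exact Real.exp_le_exp.2 (by linarith)
  nlinarith [Real.exp_pos y]

lemma integral_exp_neg_le (a θ : ℝ) (ha : 0 < a) (hθ : 0 ≤ θ) :
    ∫ φ in (0:ℝ)..θ, Real.exp (-(a*φ)) ≤ 1/a := by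
  have h1 : (∫ φ in (0:ℝ)..θ, Real.exp (-(a*φ)))
      = a⁻¹ • ∫ y in (a*0)..(a*θ), Real.exp (-y) := by
    rw [← intervalIntegral.integral_comp_mul_left (fun y => Real.exp (-y)) ha.ne']
  have h2 : (∫ y in (0:ℝ)..(a*θ), Real.exp (-y)) = 1 - Real.exp (-(a*θ)) := by
    rw [intervalIntegral.integral_comp_neg (fun y => Real.exp y)]
    rw [integral_exp]
    simp
  rw [h1, mul_zero, h2, smul_eq_mul]
  have : 1 - Real.exp (-(a*θ)) ≤ 1 := by nlinarith [Real.exp_pos (-(a*θ))]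
  rw [one_div]
  calc a⁻¹ * (1 - Real.exp (-(a*θ))) ≤ a⁻¹ * 1 :=
        mul_le_mul_of_nonneg_left this (inv_nonneg.2 ha.le)
    _ = a⁻¹ := mul_one _

lemma integrable_exp_neg_mul (a b c θ : ℝ) :
    IntervalIntegrable (fun φ => b * Real.exp (-(a*(θ-φ))) + c * Real.exp (-(a*φ)))
      volume 0 θ := by
  apply Continuous.intervalIntegrable
  continuity

end GreenAux

open GreenAux in
set_option maxHeartbeats 2000000 in
/-- Weighted `L²` decay in `|λ|` of the boundary derivative `∂_{φ'}G(λ,·,θ)` of the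
fourth-order Green's function, for `Re λ ∈ I_ε` and `|Im λ|θ ≥ 1`. -/
theorem green_boundary_L2_decay (ε : ℝ) (hε : ε ∈ Set.Ioo (0:ℝ) 1) :
    ∃ C : ℝ, 0 < C ∧ ∀ θ : ℝ, θ ∈ Set.Ioo (0:ℝ) π → ∀ lam : ℂ,
      1 - (1 - ε) * π / θ ≤ lam.re → lam.re ≤ (1 - ε) * π / θ - 1 →
      1 ≤ |lam.im| * θ →
      (‖lam‖ + (‖lam‖)⁻¹) *
        ∫ φ in (0:ℝ)..θ,
          (‖Complex.sin ((lam + 1) * (φ : ℂ)) / (4 * lam * Complex.sin ((lam + 1) * θ))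
              - Complex.sin ((lam - 1) * (φ : ℂ))
                / (4 * lam * Complex.sin ((lam - 1) * θ))‖)^2
        ≤ C / (‖lam‖)^4 := by
  obtain ⟨c, hc_def⟩ : ∃ c : ℝ, c = (1 - Real.exp (-2)) / 2 := ⟨_, rfl⟩
  have hc : 0 < c := by
    have : Real.exp (-2) < 1 := by
      rw [Real.exp_lt_one_iff]; norm_num
    rw [hc_def]; linarith
  refine ⟨(1+π^2)*(1+π)^3*Real.exp (-2)/c^4, by positivity, ?_⟩
  intro θ hθ lam hre1 hre2 him
  obtain ⟨hθ0, hθπ⟩ := hθ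
  obtain ⟨a, ha_def⟩ : ∃ a : ℝ, a = |lam.im| := ⟨_, rfl⟩
  obtain ⟨r, hr_def⟩ : ∃ r : ℝ, r = ‖lam‖ := ⟨_, rfl⟩
  rw [← ha_def] at him
  rw [← hr_def]
  have ha0 : 0 ≤ a := ha_def ▸ abs_nonneg _
  have ha : 0 < a := by nlinarith
  have him0 : lam.im ≠ 0 := by
    intro h0
    have : a = 0 := by rw [ha_def, h0, abs_zero]
    linarith
  have hlam0 : lam ≠ 0 := by
    intro h; exact him0 (by simp [h])
  have hr : 0 < r := by rw [hr_def]; exact norm_pos_iff.mpr hlam0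
  have hπ := Real.pi_pos
  -- |re lam| ≤ π * a
  have hinvθ : 1/θ ≤ a := by rw [div_le_iff₀ hθ0]; linarith
  have hbound : (1-ε)*π/θ - 1 ≤ π * a := by
    have h1 : (1-ε)*π/θ ≤ π/θ := by
      rw [div_le_div_iff₀ hθ0 hθ0]
      nlinarith [mul_pos (mul_pos hε.1 hπ) hθ0]
    have h2 : π/θ ≤ π * a := by
      rw [div_le_iff₀ hθ0]; nlinarith
    linarith
  have hre : |lam.re| ≤ π * a := by
    rw [abs_le]; constructor <;> nlinarith
  have hra : r ≤ (1+π)*a := by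
    have := Complex.norm_le_abs_re_add_abs_im lam
    rw [← hr_def, ← ha_def] at this
    nlinarith
  have har : a ≤ r := by
    have := Complex.abs_im_le_norm lam
    rw [← hr_def, ← ha_def] at this; exact this
  -- denominator bounds
  have hden : ∀ s : ℂ, s.im = lam.im → ∀ z : ℂ, z = s * θ →
      c * Real.exp (a*θ) ≤ ‖Complex.sin z‖ ∧ Complex.sin z ≠ 0 := by
    intro s hs z hz
    have him' : z.im = lam.im * θ := by
      rw [hz]; simp [Complex.mul_im, hs]
    have habs : |z.im| = a * θ := by
      rw [him', abs_mul, abs_of_nonneg hθ0.le, ha_def]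
    have h1 : 1 ≤ a * θ := him
    have hlow : c * Real.exp (a*θ) ≤ ‖Complex.sin z‖ := by
      calc c * Real.exp (a*θ) = (1 - Real.exp (-2))/2 * Real.exp (a*θ) := by rw [hc_def]
        _ ≤ Real.sinh (a*θ) := sinh_lower _ h1
        _ = Real.sinh |z.im| := by rw [habs]
        _ ≤ ‖Complex.sin z‖ := sinh_le_abs_sin z
    refine ⟨hlow, ?_⟩
    intro h0
    rw [h0] at hlow
    simp only [norm_zero] at hlow
    nlinarith [Real.exp_pos (a*θ)]
  have hA := hden (lam+1) (by simp) ((lam+1)*θ) rfl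
  have hB := hden (lam-1) (by simp) ((lam-1)*θ) rfl
  obtain ⟨hAlow, hA0⟩ := hA
  obtain ⟨hBlow, hB0⟩ := hB
  have hexp : (0:ℝ) < Real.exp (a*θ) := Real.exp_pos _
  have hApos : 0 < ‖Complex.sin ((lam+1)*θ)‖ := lt_of_lt_of_le (by positivity) hAlow
  have hBpos : 0 < ‖Complex.sin ((lam-1)*θ)‖ := lt_of_lt_of_le (by positivity) hBlow
  obtain ⟨B, hB_def⟩ : ∃ B : ℝ, B = Real.exp (-2)/(2*a^2*r^2*c^4) := ⟨_, rfl⟩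
  have hBpos' : 0 < B := by rw [hB_def]; positivity
  -- pointwise bound
  have hpt : ∀ φ ∈ Set.Icc (0:ℝ) θ,
      (‖Complex.sin ((lam + 1) * (φ : ℂ)) / (4 * lam * Complex.sin ((lam + 1) * θ))
          - Complex.sin ((lam - 1) * (φ : ℂ)) / (4 * lam * Complex.sin ((lam - 1) * θ))‖)^2
      ≤ B * Real.exp (-(a*(θ-φ))) + B * Real.exp (-(2*a*φ)) := by
    intro φ hφ
    obtain ⟨hφ0, hφθ⟩ := hφ
    -- rewrite as single fraction
    have heq : Complex.sin ((lam + 1) * (φ : ℂ)) / (4 * lam * Complex.sin ((lam + 1) * θ))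
          - Complex.sin ((lam - 1) * (φ : ℂ)) / (4 * lam * Complex.sin ((lam - 1) * θ))
        = (Complex.sin ((lam+1)*(φ:ℂ)) * Complex.sin ((lam-1)*(θ:ℂ))
            - Complex.sin ((lam-1)*(φ:ℂ)) * Complex.sin ((lam+1)*(θ:ℂ)))
          / (4 * lam * Complex.sin ((lam+1)*(θ:ℂ)) * Complex.sin ((lam-1)*(θ:ℂ))) := by
      have hX : 4 * lam * Complex.sin ((lam + 1) * θ) ≠ 0 := mul_ne_zero (mul_ne_zero (by norm_num : (4:ℂ) ≠ 0) hlam0) hA0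
      have hY : 4 * lam * Complex.sin ((lam - 1) * θ) ≠ 0 := mul_ne_zero (mul_ne_zero (by norm_num : (4:ℂ) ≠ 0) hlam0) hB0
      rw [div_sub_div _ _ hX hY, div_eq_div_iff (mul_ne_zero hX hY) (mul_ne_zero hX hB0)]
      ring
    rw [heq, trig_identity lam (φ:ℂ) (θ:ℂ), norm_div]
    -- numerator bound
    have hn1 : ‖Complex.sin (lam*((φ:ℂ)+(θ:ℂ)))‖ ≤ Real.exp (a*(φ+θ)) := by
      refine (abs_sin_le _).trans_eq ?_
      congr 1
      have h' : (lam*((φ:ℂ)+(θ:ℂ))).im = lam.im * (φ+θ) := by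
        rw [show ((φ:ℂ)+(θ:ℂ)) = ((φ+θ:ℝ):ℂ) by push_cast; ring]
        simp [Complex.mul_im]
      rw [h', abs_mul, ← ha_def, abs_of_nonneg (show (0:ℝ) ≤ φ+θ by linarith)]
    have hn2 : ‖Complex.sin (lam*((φ:ℂ)-(θ:ℂ)))‖ ≤ Real.exp (a*(θ-φ)) := by
      refine (abs_sin_le _).trans_eq ?_
      congr 1
      have h' : (lam*((φ:ℂ)-(θ:ℂ))).im = lam.im * (φ-θ) := by
        rw [show ((φ:ℂ)-(θ:ℂ)) = ((φ-θ:ℝ):ℂ) by push_cast; ring]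
        simp [Complex.mul_im]
      rw [h', abs_mul, ← ha_def, abs_sub_comm φ θ, abs_of_nonneg (show (0:ℝ) ≤ θ-φ by linarith)]
    have hn3 : ‖Complex.sin ((φ:ℂ)-(θ:ℂ))‖ ≤ θ - φ := by
      rw [show ((φ:ℂ)-(θ:ℂ)) = ((φ-θ:ℝ):ℂ) by push_cast; ring, ← Complex.ofReal_sin,
        Complex.norm_real, Real.norm_eq_abs]
      calc |Real.sin (φ-θ)| ≤ |φ-θ| := Real.abs_sin_le_abs
        _ = θ - φ := by rw [abs_sub_comm, abs_of_nonneg (by linarith)]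
    have hn4 : ‖Complex.sin ((φ:ℂ)+(θ:ℂ))‖ ≤ 2*θ := by
      rw [show ((φ:ℂ)+(θ:ℂ)) = ((φ+θ:ℝ):ℂ) by push_cast; ring, ← Complex.ofReal_sin,
        Complex.norm_real, Real.norm_eq_abs]
      calc |Real.sin (φ+θ)| ≤ |φ+θ| := Real.abs_sin_le_abs
        _ = φ + θ := abs_of_nonneg (by linarith)
        _ ≤ 2*θ := by linarith
    have hnum : ‖Complex.sin (lam*((φ:ℂ)+(θ:ℂ))) * Complex.sin ((φ:ℂ)-(θ:ℂ))
          - Complex.sin (lam*((φ:ℂ)-(θ:ℂ))) * Complex.sin ((φ:ℂ)+(θ:ℂ))‖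
        ≤ Real.exp (a*(φ+θ)) * (θ-φ) + Real.exp (a*(θ-φ)) * (2*θ) := by
      calc ‖_‖ ≤ ‖Complex.sin (lam*((φ:ℂ)+(θ:ℂ))) * Complex.sin ((φ:ℂ)-(θ:ℂ))‖
            + ‖Complex.sin (lam*((φ:ℂ)-(θ:ℂ))) * Complex.sin ((φ:ℂ)+(θ:ℂ))‖ := by
            apply (norm_sub_le _ _).trans_eq rfl
        _ ≤ Real.exp (a*(φ+θ)) * (θ-φ) + Real.exp (a*(θ-φ)) * (2*θ) := by
            rw [norm_mul, norm_mul]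
            exact add_le_add (mul_le_mul hn1 hn3 (norm_nonneg _) (Real.exp_pos _).le)
              (mul_le_mul hn2 hn4 (norm_nonneg _) (Real.exp_pos _).le)
    -- denominator handling
    obtain ⟨sA, hsA_def⟩ : ∃ x : ℝ, x = ‖Complex.sin ((lam+1)*(θ:ℂ))‖ := ⟨_, rfl⟩
    obtain ⟨sB, hsB_def⟩ : ∃ x : ℝ, x = ‖Complex.sin ((lam-1)*(θ:ℂ))‖ := ⟨_, rfl⟩
    have hAlow' : c * Real.exp (a*θ) ≤ sA := by rw [hsA_def]; exact hAlow
    have hBlow' : c * Real.exp (a*θ) ≤ sB := by rw [hsB_def]; exact hBlow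
    have hsApos : 0 < sA := lt_of_lt_of_le (by positivity) hAlow'
    have hsBpos : 0 < sB := lt_of_lt_of_le (by positivity) hBlow'
    have hdenEq : ‖4 * lam * Complex.sin ((lam+1)*(θ:ℂ)) * Complex.sin ((lam-1)*(θ:ℂ))‖
        = 4 * r * sA * sB := by
      rw [norm_mul, norm_mul, norm_mul, ← hr_def, ← hsA_def, ← hsB_def]
      norm_num
    have hdenLow : 4 * r * (c*Real.exp (a*θ)) * (c*Real.exp (a*θ))
        ≤ ‖4 * lam * Complex.sin ((lam+1)*(θ:ℂ)) * Complex.sin ((lam-1)*(θ:ℂ))‖ := by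
      rw [hdenEq]
      have h4r : (0:ℝ) ≤ 4 * r := by positivity
      calc 4 * r * (c*Real.exp (a*θ)) * (c*Real.exp (a*θ))
          ≤ 4 * r * sA * (c*Real.exp (a*θ)) := by
            apply mul_le_mul_of_nonneg_right _ (by positivity)
            exact mul_le_mul_of_nonneg_left hAlow' h4r
        _ ≤ 4 * r * sA * sB := by
            apply mul_le_mul_of_nonneg_left hBlow' (by positivity)
    have hstep1 : ‖Complex.sin (lam*((φ:ℂ)+(θ:ℂ))) * Complex.sin ((φ:ℂ)-(θ:ℂ))
          - Complex.sin (lam*((φ:ℂ)-(θ:ℂ))) * Complex.sin ((φ:ℂ)+(θ:ℂ))‖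
        / ‖4 * lam * Complex.sin ((lam+1)*(θ:ℂ)) * Complex.sin ((lam-1)*(θ:ℂ))‖
        ≤ (Real.exp (a*(φ+θ)) * (θ-φ) + Real.exp (a*(θ-φ)) * (2*θ))
          / (4 * r * (c*Real.exp (a*θ)) * (c*Real.exp (a*θ))) := by
      have hnn : (0:ℝ) ≤ Real.exp (a*(φ+θ)) * (θ-φ) + Real.exp (a*(θ-φ)) * (2*θ) := by
        nlinarith [Real.exp_pos (a*(φ+θ)), Real.exp_pos (a*(θ-φ))]
      apply div_le_div₀ hnn hnum (by positivity) hdenLow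
    -- exponential rearrangement
    have e1 : Real.exp (a*(φ+θ)) = Real.exp (-(a*(θ-φ))) * Real.exp (a*θ)^2 := by
      rw [sq, ← Real.exp_add, ← Real.exp_add]; ring_nf
    have e2 : Real.exp (a*(θ-φ)) = Real.exp (-(a*θ)) * Real.exp (-(a*φ)) * Real.exp (a*θ)^2 := by
      rw [sq, ← Real.exp_add, ← Real.exp_add, ← Real.exp_add]; ring_nf
    have h1 := mul_exp_neg_half_le (a*(θ-φ))
    have h2 := mul_exp_neg_le (a*θ)
    have key : a * (Real.exp (a*(φ+θ)) * (θ-φ) + Real.exp (a*(θ-φ)) * (2*θ))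
        ≤ 2*Real.exp (-1) * (Real.exp (-(a*(θ-φ)/2)) + Real.exp (-(a*φ))) * Real.exp (a*θ)^2 := by
      have hh1 : (a*(θ-φ)) * Real.exp (-(a*(θ-φ))) * Real.exp (a*θ)^2
          ≤ 2*Real.exp (-1)*Real.exp (-(a*(θ-φ)/2)) * Real.exp (a*θ)^2 :=
        mul_le_mul_of_nonneg_right (mul_exp_neg_half_le (a*(θ-φ))) (by positivity)
      have hh2 : (a*θ) * Real.exp (-(a*θ)) * (2 * Real.exp (-(a*φ)) * Real.exp (a*θ)^2)
          ≤ Real.exp (-1) * (2 * Real.exp (-(a*φ)) * Real.exp (a*θ)^2) :=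
        mul_le_mul_of_nonneg_right h2 (by positivity)
      calc a * (Real.exp (a*(φ+θ)) * (θ-φ) + Real.exp (a*(θ-φ)) * (2*θ))
          = (a*(θ-φ)) * Real.exp (-(a*(θ-φ))) * Real.exp (a*θ)^2
            + (a*θ) * Real.exp (-(a*θ)) * (2 * Real.exp (-(a*φ)) * Real.exp (a*θ)^2) := by
            rw [e1, e2]; ring
        _ ≤ 2*Real.exp (-1)*Real.exp (-(a*(θ-φ)/2)) * Real.exp (a*θ)^2
            + Real.exp (-1) * (2 * Real.exp (-(a*φ)) * Real.exp (a*θ)^2) := add_le_add hh1 hh2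
        _ = 2*Real.exp (-1) * (Real.exp (-(a*(θ-φ)/2)) + Real.exp (-(a*φ))) * Real.exp (a*θ)^2 := by
            ring
    have hstep2 : (Real.exp (a*(φ+θ)) * (θ-φ) + Real.exp (a*(θ-φ)) * (2*θ))
          / (4 * r * (c*Real.exp (a*θ)) * (c*Real.exp (a*θ)))
        ≤ 2*Real.exp (-1) * (Real.exp (-(a*(θ-φ)/2)) + Real.exp (-(a*φ))) / (4*a*r*c^2) := by
      rw [div_le_div_iff₀ (by positivity) (by positivity)]
      have hscale : (0:ℝ) ≤ 4*r*c^2 := by positivity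
      calc (Real.exp (a*(φ+θ)) * (θ-φ) + Real.exp (a*(θ-φ)) * (2*θ)) * (4*a*r*c^2)
          = (a * (Real.exp (a*(φ+θ)) * (θ-φ) + Real.exp (a*(θ-φ)) * (2*θ))) * (4*r*c^2) := by
            ring
        _ ≤ (2*Real.exp (-1) * (Real.exp (-(a*(θ-φ)/2)) + Real.exp (-(a*φ))) * Real.exp (a*θ)^2)
              * (4*r*c^2) := mul_le_mul_of_nonneg_right key hscale
        _ = 2*Real.exp (-1) * (Real.exp (-(a*(θ-φ)/2)) + Real.exp (-(a*φ)))
              * (4 * r * (c*Real.exp (a*θ)) * (c*Real.exp (a*θ))) := by ring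
    have habs2 : ‖Complex.sin (lam*((φ:ℂ)+(θ:ℂ))) * Complex.sin ((φ:ℂ)-(θ:ℂ))
          - Complex.sin (lam*((φ:ℂ)-(θ:ℂ))) * Complex.sin ((φ:ℂ)+(θ:ℂ))‖
        / ‖4 * lam * Complex.sin ((lam+1)*(θ:ℂ)) * Complex.sin ((lam-1)*(θ:ℂ))‖
        ≤ 2*Real.exp (-1) * (Real.exp (-(a*(θ-φ)/2)) + Real.exp (-(a*φ))) / (4*a*r*c^2) :=
      hstep1.trans hstep2
    -- squaring
    have hE : Real.exp (-(a*(θ-φ)/2))^2 = Real.exp (-(a*(θ-φ))) := by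
      rw [sq, ← Real.exp_add]; ring_nf
    have hE' : Real.exp (-(a*φ))^2 = Real.exp (-(2*a*φ)) := by
      rw [sq, ← Real.exp_add]; ring_nf
    have hee : Real.exp (-1)^2 = Real.exp (-2) := by
      rw [sq, ← Real.exp_add]; norm_num
    have hsq := pow_le_pow_left₀ (by positivity) habs2 2
    refine hsq.trans ?_
    have hexpand : (2*Real.exp (-1) * (Real.exp (-(a*(θ-φ)/2)) + Real.exp (-(a*φ))) / (4*a*r*c^2))^2
        = Real.exp (-2) * (Real.exp (-(a*(θ-φ)/2)) + Real.exp (-(a*φ)))^2 / (4*a^2*r^2*c^4) := by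
      rw [div_pow, mul_pow, mul_pow, hee]; ring
    rw [hexpand]
    have hsum : (Real.exp (-(a*(θ-φ)/2)) + Real.exp (-(a*φ)))^2
        ≤ 2*Real.exp (-(a*(θ-φ))) + 2*Real.exp (-(2*a*φ)) := by
      have h2xy := two_mul_le_add_sq (Real.exp (-(a*(θ-φ)/2))) (Real.exp (-(a*φ)))
      calc (Real.exp (-(a*(θ-φ)/2)) + Real.exp (-(a*φ)))^2
          = Real.exp (-(a*(θ-φ)/2))^2 + Real.exp (-(a*φ))^2
            + 2*Real.exp (-(a*(θ-φ)/2))*Real.exp (-(a*φ)) := by ring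
        _ ≤ 2*Real.exp (-(a*(θ-φ)/2))^2 + 2*Real.exp (-(a*φ))^2 := by linarith [h2xy]
        _ = 2*Real.exp (-(a*(θ-φ))) + 2*Real.exp (-(2*a*φ)) := by rw [hE, hE']
    have hBeq : B * Real.exp (-(a*(θ-φ))) + B * Real.exp (-(2*a*φ))
        = Real.exp (-2) * (2*Real.exp (-(a*(θ-φ))) + 2*Real.exp (-(2*a*φ))) / (4*a^2*r^2*c^4) := by
      rw [hB_def]; ring
    rw [hBeq]
    apply div_le_div_of_nonneg_right _ (by positivity) |>.trans_eq rfl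
    exact mul_le_mul_of_nonneg_left hsum (Real.exp_pos _).le
  -- integrability
  have hcont : Continuous (fun φ:ℝ =>
      (‖Complex.sin ((lam + 1) * (φ : ℂ)) / (4 * lam * Complex.sin ((lam + 1) * θ))
          - Complex.sin ((lam - 1) * (φ : ℂ)) / (4 * lam * Complex.sin ((lam - 1) * θ))‖)^2) := by
    have hc1 : Continuous fun φ:ℝ => Complex.sin ((lam+1)*(φ:ℂ)) :=
      Complex.continuous_sin.comp (continuous_const.mul Complex.continuous_ofReal)
    have hc2 : Continuous fun φ:ℝ => Complex.sin ((lam-1)*(φ:ℂ)) :=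
      Complex.continuous_sin.comp (continuous_const.mul Complex.continuous_ofReal)
    exact (continuous_norm.comp ((hc1.div_const _).sub (hc2.div_const _))).pow 2
  have hFint : IntervalIntegrable (fun φ:ℝ =>
      (‖Complex.sin ((lam + 1) * (φ : ℂ)) / (4 * lam * Complex.sin ((lam + 1) * θ))
          - Complex.sin ((lam - 1) * (φ : ℂ)) / (4 * lam * Complex.sin ((lam - 1) * θ))‖)^2)
      volume 0 θ := hcont.intervalIntegrable _ _
  have hG1int : IntervalIntegrable (fun φ:ℝ => B * Real.exp (-(a*(θ-φ)))) volume 0 θ := by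
    apply Continuous.intervalIntegrable; continuity
  have hG2int : IntervalIntegrable (fun φ:ℝ => B * Real.exp (-(2*a*φ))) volume 0 θ := by
    apply Continuous.intervalIntegrable; continuity
  have hGint : IntervalIntegrable (fun φ:ℝ => B * Real.exp (-(a*(θ-φ))) + B * Real.exp (-(2*a*φ)))
      volume 0 θ := hG1int.add hG2int
  have hmono := intervalIntegral.integral_mono_on hθ0.le hFint hGint hpt
  -- evaluate the bound integral
  have hI1 : (∫ φ in (0:ℝ)..θ, Real.exp (-(a*(θ-φ)))) ≤ 1/a := by
    have hcomp := intervalIntegral.integral_comp_sub_left (a := (0:ℝ)) (b := θ)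
      (fun x => Real.exp (-(a*x))) θ
    simp only [sub_self, sub_zero] at hcomp
    rw [hcomp]
    exact integral_exp_neg_le a θ ha hθ0.le
  have hI2 : (∫ φ in (0:ℝ)..θ, Real.exp (-(2*a*φ))) ≤ 1/a := by
    have := integral_exp_neg_le (2*a) θ (by positivity) hθ0.le
    have h2a : 1/(2*a) ≤ 1/a := by
      rw [div_le_div_iff₀ (by positivity) ha]; nlinarith
    linarith
  have hGval : (∫ φ in (0:ℝ)..θ, (B * Real.exp (-(a*(θ-φ))) + B * Real.exp (-(2*a*φ))))
      ≤ 2*B/a := by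
    rw [intervalIntegral.integral_add hG1int hG2int,
      intervalIntegral.integral_const_mul, intervalIntegral.integral_const_mul]
    have g1 := mul_le_mul_of_nonneg_left hI1 hBpos'.le
    have g2 := mul_le_mul_of_nonneg_left hI2 hBpos'.le
    have : B * (1/a) + B * (1/a) = 2*B/a := by ring
    linarith
  have hintF : (∫ φ in (0:ℝ)..θ,
      (‖Complex.sin ((lam + 1) * (φ : ℂ)) / (4 * lam * Complex.sin ((lam + 1) * θ))
          - Complex.sin ((lam - 1) * (φ : ℂ)) / (4 * lam * Complex.sin ((lam - 1) * θ))‖)^2)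
      ≤ 2*B/a := hmono.trans hGval
  have hF0 : (0:ℝ) ≤ ∫ φ in (0:ℝ)..θ,
      (‖Complex.sin ((lam + 1) * (φ : ℂ)) / (4 * lam * Complex.sin ((lam + 1) * θ))
          - Complex.sin ((lam - 1) * (φ : ℂ)) / (4 * lam * Complex.sin ((lam - 1) * θ))‖)^2 :=
    intervalIntegral.integral_nonneg hθ0.le (fun x _ => by positivity)
  -- r + r⁻¹ ≤ (1+π²) r
  have hrlow : 1/π ≤ r := by
    have h1 : 1/π ≤ 1/θ := by
      rw [div_le_div_iff₀ hπ hθ0]; nlinarith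
    linarith
  have hrinv : r⁻¹ ≤ π := by
    rw [inv_eq_one_div]
    calc 1/r ≤ 1/(1/π) := by
          apply one_div_le_one_div_of_le (by positivity) hrlow
      _ = π := one_div_one_div π
  have hrr : r + r⁻¹ ≤ (1+π^2)*r := by
    have hπ2 : π ≤ π^2*r := by
      have h := mul_le_mul_of_nonneg_left hrlow (by positivity : (0:ℝ) ≤ π^2)
      have : π^2*(1/π) = π := by field_simp
      linarith
    have : r⁻¹ ≤ π^2*r := hrinv.trans hπ2
    linarith
  -- final chain
  calc (r + r⁻¹) * ∫ φ in (0:ℝ)..θ,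
        (‖Complex.sin ((lam + 1) * (φ : ℂ)) / (4 * lam * Complex.sin ((lam + 1) * θ))
            - Complex.sin ((lam - 1) * (φ : ℂ)) / (4 * lam * Complex.sin ((lam - 1) * θ))‖)^2
      ≤ (1+π^2)*r * ∫ φ in (0:ℝ)..θ,
        (‖Complex.sin ((lam + 1) * (φ : ℂ)) / (4 * lam * Complex.sin ((lam + 1) * θ))
            - Complex.sin ((lam - 1) * (φ : ℂ)) / (4 * lam * Complex.sin ((lam - 1) * θ))‖)^2 :=
        mul_le_mul_of_nonneg_right hrr hF0
    _ ≤ (1+π^2)*r * (2*B/a) := mul_le_mul_of_nonneg_left hintF (by positivity)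
    _ = ((1+π^2)*(1+π)^3*Real.exp (-2)/c^4) / ((1+π)^3*a^3*r) := by
        rw [hB_def]; field_simp
    _ ≤ ((1+π^2)*(1+π)^3*Real.exp (-2)/c^4) / r^4 := by
        apply div_le_div_of_nonneg_left (by positivity) (by positivity)
        calc r^4 = r^3 * r := by ring
          _ ≤ ((1+π)*a)^3 * r := by
              apply mul_le_mul_of_nonneg_right (pow_le_pow_left₀ hr.le hra 3) hr.le
          _ = (1+π)^3*a^3*r := by ring
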